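/- Let n ≥ 2. Then every minimal vertex cover of the path P_n contains either x_n or x_{n−1}, but not both. Consequently, if U and V are s-fold products of minimal generators of J(P_n) (i.e., U, V ∈ F(J(P_n)^s)) and U divides V, then the exponent of x_n in U equals the exponent of x_n in V, and the exponent of x_{n−1} in U equals the exponent of x_{n−1} in V. -/

import Mathlib

open MvPolynomial

noncomputable section

/-- The cover ideal of the path graph `P_n` on vertices `x_1, …, x_n`:
the intersection of the ideals `(x_i, x_{i+1})` over the edges of the path. -/
def pathCoverIdeal (k : Type*) [Field k] (n : ℕ) : Ideal (MvPolynomial ℕ k) :=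
  ⨅ i ∈ Finset.Icc 1 (n - 1), Ideal.span {(X i : MvPolynomial ℕ k), X (i + 1)}

/-- A monomial with coefficient `1`. -/
def IsMonomial {k : Type*} [Field k] (m : MvPolynomial ℕ k) : Prop :=
  ∃ a : ℕ →₀ ℕ, m = monomial a 1

/-- The minimal monomial generating set `G(I)` of a monomial ideal `I`:
monomials of `I` that are not strictly divisible by another monomial of `I`. -/
def minGens {k : Type*} [Field k] (I : Ideal (MvPolynomial ℕ k)) :
    Set (MvPolynomial ℕ k) :=
  {m | IsMonomial m ∧ m ∈ I ∧ ∀ m', IsMonomial m' → m' ∈ I → m' ∣ m → m' = m}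

/-- The rooted list `R(P_n)` of the path `P_n`. -/
def rootedList (k : Type*) [Field k] : ℕ → List (MvPolynomial ℕ k)
  | 0 => [1]
  | 1 => [1]
  | 2 => [X 1, X 2]
  | 3 => [X 2, X 1 * X 3]
  | (n + 4) =>
      ((rootedList k (n + 2)).map fun u => X (n + 3) * u) ++
      ((rootedList k (n + 1)).map fun u => X (n + 4) * X (n + 2) * u)

/-- `F(I^s)`: the set of `s`-fold products of minimal generators of `I`. -/
def sFold {k : Type*} [Field k] (I : Ideal (MvPolynomial ℕ k)) (s : ℕ) :
    Set (MvPolynomial ℕ k) :=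
  {m | ∃ L : List (MvPolynomial ℕ k), L.length = s ∧ (∀ u ∈ L, u ∈ minGens I) ∧ m = L.prod}

/-- `a >_lex b`: the first entry where `a` and `b` differ is bigger in `a`. -/
def lexGt (a b : ℕ → ℕ) : Prop :=
  ∃ t, (∀ j, j < t → a j = b j) ∧ b t < a t

/-- `a` is an exponent-vector expression of `M` as an `s`-fold product of the terms of
the list `L`. -/
def IsExprOn {k : Type*} [Field k] (L : List (MvPolynomial ℕ k)) (s : ℕ) (a : ℕ → ℕ)
    (M : MvPolynomial ℕ k) : Prop :=
  (∀ i, L.length ≤ i → a i = 0) ∧ (∑ i ∈ Finset.range L.length, a i) = s ∧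
    M = ∏ i ∈ Finset.range L.length, (L.getD i 1) ^ (a i)

/-- `a` is the (lexicographically) maximal expression of `M` as an `s`-fold product of
the terms of the list `L`. -/
def IsMaxExpr {k : Type*} [Field k] (L : List (MvPolynomial ℕ k)) (s : ℕ) (a : ℕ → ℕ)
    (M : MvPolynomial ℕ k) : Prop :=
  IsExprOn L s a M ∧ ∀ b, IsExprOn L s b M → b ≠ a → lexGt a b

/-- The rooted order `M >_R N` on `s`-fold products, relative to the list `L` of
minimal generators: maximal expressions are compared lexicographically. -/
def rootedGt {k : Type*} [Field k] (L : List (MvPolynomial ℕ k)) (s : ℕ)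
    (M N : MvPolynomial ℕ k) : Prop :=
  ∃ a b, IsMaxExpr L s a M ∧ IsMaxExpr L s b N ∧ lexGt a b

/-- An ideal is generated by a subset of the variables. -/
def genByVars {k : Type*} [Field k] (I : Ideal (MvPolynomial ℕ k)) : Prop :=
  ∃ T : Set ℕ, I = Ideal.span ((fun i => (X i : MvPolynomial ℕ k)) '' T)

end

/-- A vertex cover of the path `P_n` (vertices `x_1, …, x_n`, identified with the
indices `1, …, n`): a set of vertices meeting every edge `{x_i, x_{i+1}}`. -/
def IsVertexCover (n : ℕ) (C : Set ℕ) : Prop :=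
  C ⊆ Set.Icc 1 n ∧ ∀ i ∈ Finset.Icc 1 (n - 1), i ∈ C ∨ i + 1 ∈ C

/-- A minimal vertex cover of `P_n`. -/
def IsMinVertexCover (n : ℕ) (C : Set ℕ) : Prop :=
  IsVertexCover n C ∧ ∀ D, IsVertexCover n D → D ⊆ C → D = C


open MvPolynomial in
lemma monomial_mem_pathCoverIdeal {k : Type*} [Field k] {n : ℕ} (a : ℕ →₀ ℕ) :
    (monomial a 1 : MvPolynomial ℕ k) ∈ pathCoverIdeal k n ↔
      ∀ i ∈ Finset.Icc 1 (n - 1), 1 ≤ a i ∨ 1 ≤ a (i + 1) := by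
  classical
  unfold pathCoverIdeal
  simp only [Ideal.mem_iInf]
  refine forall₂_congr fun i _ => ?_
  have h : ({(X i : MvPolynomial ℕ k), X (i+1)} : Set _) = X '' {i, i+1} := by
    rw [Set.image_pair]
  rw [h, mem_ideal_span_X_image, support_monomial, if_neg one_ne_zero]
  simp [Nat.one_le_iff_ne_zero]

open MvPolynomial in
lemma minGens_pathCoverIdeal_exp {k : Type*} [Field k] {n : ℕ} (hn : 2 ≤ n)
    {m : MvPolynomial ℕ k} (hm : m ∈ minGens (pathCoverIdeal k n)) :
    ∃ a : ℕ →₀ ℕ, m = monomial a 1 ∧ a n + a (n - 1) = 1 := by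
  obtain ⟨⟨a, rfl⟩, hmem, hmin⟩ := hm
  refine ⟨a, rfl, ?_⟩
  rw [monomial_mem_pathCoverIdeal] at hmem
  have hedge := hmem (n - 1) (Finset.mem_Icc.2 ⟨by omega, le_refl _⟩)
  rw [Nat.sub_add_cancel (by omega)] at hedge
  by_contra hne
  have hsum : 2 ≤ a n + a (n - 1) := by omega
  set j : ℕ := if 1 ≤ a n then n else n - 1 with hj
  have haj : 1 ≤ a j := by
    by_cases h : 1 ≤ a n
    · rw [hj, if_pos h]; exact h
    · rw [hj, if_neg h]; omega
  set a' : ℕ →₀ ℕ := a - Finsupp.single j 1 with ha'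
  have ha'j : a' j = a j - 1 := by
    rw [ha', Finsupp.tsub_apply, Finsupp.single_eq_same]
  have ha'o : ∀ i, i ≠ j → a' i = a i := by
    intro i hi
    rw [ha', Finsupp.tsub_apply, Finsupp.single_eq_of_ne' (Ne.symm hi), Nat.sub_zero]
  have hmem' : (monomial a' 1 : MvPolynomial ℕ k) ∈ pathCoverIdeal k n := by
    rw [monomial_mem_pathCoverIdeal]
    intro i hi
    have hi' := Finset.mem_Icc.1 hi
    have hbase := hmem i hi
    by_cases hc : 1 ≤ a n
    · have hj' : j = n := if_pos hc
      by_cases he : i = n - 1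
      · subst he
        rw [Nat.sub_add_cancel (by omega)]
        rw [ha'o (n-1) (by rw [hj']; omega)]
        rw [hj'] at ha'j
        rw [ha'j]
        omega
      · rw [ha'o i (by rw [hj']; omega), ha'o (i+1) (by rw [hj']; omega)]
        exact hbase
    · have hj' : j = n - 1 := if_neg hc
      have ha'n1 : 1 ≤ a' (n-1) := by
        rw [← hj', ha'j, hj']; omega
      by_cases he : i = n - 1
      · subst he; exact Or.inl ha'n1
      · by_cases he2 : i + 1 = n - 1
        · rw [he2]; exact Or.inr ha'n1
        · rw [ha'o i (by rw [hj']; omega), ha'o (i+1) (by rw [hj']; omega)]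
          exact hbase
  have hdvd : (monomial a' 1 : MvPolynomial ℕ k) ∣ monomial a 1 :=
    monomial_dvd_monomial.2 ⟨Or.inr tsub_le_self, dvd_refl 1⟩
  have heq := hmin _ ⟨a', rfl⟩ hmem' hdvd
  have : a' = a := monomial_left_injective one_ne_zero heq
  rw [this] at ha'j
  omega

open MvPolynomial in
lemma sFold_monomial {k : Type*} [Field k] {n : ℕ} (hn : 2 ≤ n) {s : ℕ}
    {U : MvPolynomial ℕ k} (hU : U ∈ sFold (pathCoverIdeal k n) s) :
    ∃ A : ℕ →₀ ℕ, U = monomial A 1 ∧ A n + A (n - 1) = s := by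
  obtain ⟨L, hlen, hLmem, rfl⟩ := hU
  subst hlen
  induction L with
  | nil => exact ⟨0, by simp, by simp⟩
  | cons u L ih =>
    obtain ⟨A, hA, hAs⟩ := ih (fun v hv => hLmem v (List.mem_cons_of_mem _ hv))
    obtain ⟨a, ha, has⟩ := minGens_pathCoverIdeal_exp hn (hLmem u List.mem_cons_self)
    refine ⟨a + A, ?_, ?_⟩
    · rw [List.prod_cons, hA, ha, monomial_mul, one_mul]
    · simp only [Finsupp.add_apply, List.length_cons]
      omega

/-- For `n ≥ 2`, every minimal vertex cover of `P_n` contains `x_n` or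
`x_{n-1}` but not both; consequently, if `U, V ∈ F(J(P_n)^s)` and `U ∣ V`, then the
exponents of `x_n` (resp. `x_{n-1}`) in `U` and `V` coincide. -/
theorem minimal_cover_xor_and_divisor_same_type (k : Type*) [Field k]
    (n : ℕ) (hn : 2 ≤ n) :
    (∀ C, IsMinVertexCover n C → Xor' (n ∈ C) (n - 1 ∈ C)) ∧
    (∀ s : ℕ, ∀ U V : MvPolynomial ℕ k,
      U ∈ sFold (pathCoverIdeal k n) s → V ∈ sFold (pathCoverIdeal k n) s → U ∣ V →
        degreeOf n U = degreeOf n V ∧ degreeOf (n - 1) U = degreeOf (n - 1) V) := by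
  constructor
  · rintro C ⟨⟨hsub, hcov⟩, hminC⟩
    have hedge := hcov (n-1) (Finset.mem_Icc.2 ⟨by omega, le_refl _⟩)
    rw [Nat.sub_add_cancel (by omega)] at hedge
    rcases Classical.em (n ∈ C) with h1 | h1 <;> rcases Classical.em (n-1 ∈ C) with h2 | h2
    · exfalso
      have hD : IsVertexCover n (C \ {n}) := by
        refine ⟨fun x hx => hsub hx.1, fun i hi => ?_⟩
        have hi' := Finset.mem_Icc.1 hi
        by_cases he : i = n - 1
        · subst he
          exact Or.inl ⟨h2, by simp; omega⟩
        · rcases hcov i hi with h | h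
          · exact Or.inl ⟨h, by simp; omega⟩
          · exact Or.inr ⟨h, by simp; omega⟩
      have heq := hminC _ hD Set.diff_subset
      have hmem : n ∈ C \ {n} := by rw [heq]; exact h1
      simp at hmem
    · exact Or.inl ⟨h1, h2⟩
    · exact Or.inr ⟨h2, h1⟩
    · exact absurd hedge (by tauto)
  · intro s U V hU hV hUV
    obtain ⟨A, rfl, hA⟩ := sFold_monomial hn hU
    obtain ⟨B, rfl, hB⟩ := sFold_monomial hn hV
    have hle : A ≤ B := by
      rcases monomial_dvd_monomial.1 hUV with ⟨h | h, -⟩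
      · exact absurd h one_ne_zero
      · exact h
    have h1 : A n ≤ B n := Finsupp.le_def.1 hle n
    have h2 : A (n-1) ≤ B (n-1) := Finsupp.le_def.1 hle (n-1)
    rw [degreeOf_monomial_eq _ _ one_ne_zero, degreeOf_monomial_eq _ _ one_ne_zero,
        degreeOf_monomial_eq _ _ one_ne_zero, degreeOf_monomial_eq _ _ one_ne_zero]
    omega
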